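/- Chain characterization of safe paths: let P be a finite set in ℝ² and s, t ∈ P. Suppose q₀ = s, q₁, ..., q_k = t are points such that for each i there is a closed disk containing q_i and q_{i+1} whose interior contains no point of P ∪ {q₀,...,q_k} other than possibly q_i and q_{i+1}. Then in the Voronoi diagram of P ∪ {q₀,...,q_k}, the union of the Voronoi cells of q₀,...,q_k is a connected set. -/

import Mathlib

open Metric RealInnerProductSpace

def vorCell (Q : Set (EuclideanSpace ℝ (Fin 2))) (q : EuclideanSpace ℝ (Fin 2)) :
    Set (EuclideanSpace ℝ (Fin 2)) :=
  {x | ∀ p ∈ Q, dist x q ≤ dist x p}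

local notation "E" => EuclideanSpace ℝ (Fin 2)

lemma convex_dist_le_dist (a b : E) : Convex ℝ {x : E | dist x a ≤ dist x b} := by
  have h : {x : E | dist x a ≤ dist x b}
      = {x : E | (inner ℝ x (b - a) : ℝ) ≤ (‖b‖ ^ 2 - ‖a‖ ^ 2) / 2} := by
    ext x
    simp only [Set.mem_setOf_eq, dist_eq_norm]
    rw [← pow_le_pow_iff_left₀ (norm_nonneg _) (norm_nonneg _) (two_ne_zero),
      norm_sub_sq_real, norm_sub_sq_real, inner_sub_right]
    constructor <;> intro h <;> nlinarith
  rw [h]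
  exact convex_halfSpace_le
    ⟨fun u v => inner_add_left u v _, fun c u => real_inner_smul_left u _ c⟩ _

lemma vorCell_convex (Q : Set E) (a : E) : Convex ℝ (vorCell Q a) := by
  have h : vorCell Q a = ⋂ p ∈ Q, {x : E | dist x a ≤ dist x p} := by
    ext x; simp [vorCell, Set.mem_iInter₂]
  rw [h]
  exact convex_iInter₂ fun p _ => convex_dist_le_dist a p

/-- Key geometric lemma: from a witness ball we get a common point of the two cells. -/
lemma cells_meet (Q : Set E) (a b c : E) (r : ℝ)
    (ha : dist c a ≤ r) (hb : dist c b ≤ r) (hab : dist c a ≤ dist c b)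
    (hemp : ∀ p ∈ Q, p ≠ a → p ≠ b → r ≤ dist c p) :
    ∃ x, x ∈ vorCell Q a ∧ x ∈ vorCell Q b := by
  set r' : ℝ := dist c b with hr'
  set f : ℝ → ℝ := fun l => dist (c + l • (b - c)) a - (1 - l) * r' with hf
  have hcont : ContinuousOn f (Set.Icc 0 1) := by
    apply Continuous.continuousOn
    fun_prop
  have hf0 : f 0 ≤ 0 := by simp [hf]; simpa using hab
  have hf1 : 0 ≤ f 1 := by
    simp [hf]
  have : (0 : ℝ) ∈ f '' Set.Icc 0 1 :=
    intermediate_value_Icc (by norm_num) hcont ⟨hf0, hf1⟩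
  obtain ⟨l, hl, hfl⟩ := this
  set x : E := c + l • (b - c) with hx
  have hxa : dist x a = (1 - l) * r' := by
    have := hfl
    simp only [hf] at this
    linarith
  have hxb : dist x b = (1 - l) * r' := by
    have : x - b = (1 - l) • (c - b) := by
      rw [hx]; module
    rw [dist_eq_norm, this, norm_smul, Real.norm_eq_abs,
      abs_of_nonneg (by linarith [hl.2]), ← dist_eq_norm]
  have hcx : dist c x = l * r' := by
    have h : c - x = l • (c - b) := by rw [hx]; module
    rw [dist_eq_norm, h, norm_smul, Real.norm_eq_abs,
      abs_of_nonneg hl.1, ← dist_eq_norm]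
  have hkey : ∀ p ∈ Q, (1 - l) * r' ≤ dist x p := by
    intro p hp
    by_cases hpa : p = a
    · rw [hpa, hxa]
    by_cases hpb : p = b
    · rw [hpb, hxb]
    have h1 : r ≤ dist c p := hemp p hp hpa hpb
    have h2 : dist c p ≤ dist c x + dist x p := dist_triangle c x p
    have : r' ≤ r := hb
    rw [hcx] at h2
    nlinarith [hl.1, hl.2]
  refine ⟨x, fun p hp => ?_, fun p hp => ?_⟩
  · rw [hxa]; exact hkey p hp
  · rw [hxb]; exact hkey p hp

/-- A chain of connected sets with consecutive nonempty intersections has connected union. -/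
lemma chain_connected {X : Type*} [TopologicalSpace X] :
    ∀ {k : ℕ} (f : Fin (k + 1) → Set X), (∀ i, IsConnected (f i)) →
      (∀ i : Fin k, (f i.castSucc ∩ f i.succ).Nonempty) → IsConnected (⋃ i, f i) := by
  intro k
  induction k with
  | zero =>
    intro f hc _
    have h : (⋃ i, f i) = f 0 := by
      ext x
      simp only [Set.mem_iUnion]
      exact ⟨fun ⟨i, hi⟩ => by rwa [Fin.fin_one_eq_zero i] at hi, fun h => ⟨0, h⟩⟩
    rw [h]; exact hc 0
  | succ n ih =>
    intro f hc hm
    have hdecomp : (⋃ i, f i) = (⋃ i : Fin (n + 1), f i.castSucc) ∪ f (Fin.last (n + 1)) := by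
      ext x
      simp only [Set.mem_iUnion, Set.mem_union]
      constructor
      · rintro ⟨i, hi⟩
        rcases Fin.eq_castSucc_or_eq_last i with ⟨j, rfl⟩ | rfl
        · exact Or.inl ⟨j, hi⟩
        · exact Or.inr hi
      · rintro (⟨j, hj⟩ | h)
        exacts [⟨_, hj⟩, ⟨_, h⟩]
    rw [hdecomp]
    obtain ⟨y, hy1, hy2⟩ := hm (Fin.last n)
    refine IsConnected.union ⟨y, Set.mem_iUnion.2 ⟨Fin.last n, hy1⟩, ?_⟩
      (ih _ (fun i => hc _) (fun i => ?_)) (hc _)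
    · rwa [← Fin.succ_last]
    · have := hm i.castSucc
      rwa [Fin.succ_castSucc] at this

/-- Chain characterization of safe paths: if consecutive points of the chain `q₀,…,q_k`
admit empty witness disks, then the union of their Voronoi cells in the diagram of
`P ∪ {q₀,…,q_k}` is connected. -/
theorem stmt9 (P : Finset (EuclideanSpace ℝ (Fin 2))) (s t : EuclideanSpace ℝ (Fin 2))
    (hs : s ∈ P) (ht : t ∈ P) (k : ℕ) (q : Fin (k + 1) → EuclideanSpace ℝ (Fin 2))
    (hq0 : q 0 = s) (hqk : q (Fin.last k) = t)
    (hchain : ∀ i : Fin k, ∃ (c : EuclideanSpace ℝ (Fin 2)) (r : ℝ),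
      q i.castSucc ∈ closedBall c r ∧ q i.succ ∈ closedBall c r ∧
      ∀ y ∈ (↑P : Set (EuclideanSpace ℝ (Fin 2))) ∪ Set.range q,
        y ≠ q i.castSucc → y ≠ q i.succ → y ∉ ball c r) :
    IsConnected (⋃ i : Fin (k + 1),
      vorCell ((↑P : Set (EuclideanSpace ℝ (Fin 2))) ∪ Set.range q) (q i)) := by
  set Q : Set E := (↑P : Set E) ∪ Set.range q with hQ
  apply chain_connected
  · intro i
    refine ⟨⟨q i, fun p _ => by simp [dist_nonneg]⟩, (vorCell_convex Q (q i)).isPreconnected⟩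
  · intro i
    obtain ⟨c, r, h1, h2, h3⟩ := hchain i
    rw [mem_closedBall, dist_comm] at h1 h2
    have hemp : ∀ p ∈ Q, p ≠ q i.castSucc → p ≠ q i.succ → r ≤ dist c p := by
      intro p hp hpa hpb
      have := h3 p hp hpa hpb
      rw [mem_ball, dist_comm] at this
      linarith [not_lt.mp this]
    rcases le_total (dist c (q i.castSucc)) (dist c (q i.succ)) with h | h
    · obtain ⟨x, hx1, hx2⟩ := cells_meet Q (q i.castSucc) (q i.succ) c r h1 h2 h hemp
      exact ⟨x, hx1, hx2⟩
    · obtain ⟨x, hx1, hx2⟩ := cells_meet Q (q i.succ) (q i.castSucc) c r h2 h1 h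
        (fun p hp h1' h2' => hemp p hp h2' h1')
      exact ⟨x, hx2, hx1⟩
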